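/- Let M be a 3×3 integer matrix all of whose eigenvalues have the same modulus r > 1. Then either |det M| is a perfect cube, or the characteristic polynomial of M equals λ³ - s·|det M| for some sign s ∈ {1,-1} (equivalently, M is conjugate over ℂ to the companion matrix of λ³ ∓ |det M|). -/

import Mathlib

open Polynomial

/-- A nonnegative rational whose cube is a natural number is itself a natural number
(statement phrased in terms of the cube). -/
lemma aux_cube_rat (q : ℚ) (k : ℕ) (hq : 0 ≤ q) (h : q ^ 3 = (k : ℚ)) :
    ∃ n : ℕ, k = n ^ 3 := by
  have hden : q.den = 1 := by
    have h1 : (q ^ 3).den = 1 := by rw [h]; simp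
    rw [Rat.den_pow] at h1
    by_contra hne
    have h2 : 1 < q.den := lt_of_le_of_ne q.pos (Ne.symm hne)
    have h3 := Nat.le_self_pow (by norm_num : (3:ℕ) ≠ 0) q.den
    omega
  have hnum : (q.num : ℚ) = q := (Rat.den_eq_one_iff q).mp hden
  have h2 : q.num ^ 3 = (k : ℤ) := by
    have : ((q.num : ℚ)) ^ 3 = (k : ℚ) := by rw [hnum]; exact h
    exact_mod_cast this
  have hn : 0 ≤ q.num := Rat.num_nonneg.mpr hq
  refine ⟨q.num.toNat, ?_⟩
  have h3 : ((q.num.toNat : ℤ)) = q.num := Int.toNat_of_nonneg hn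
  have : (k : ℤ) = (q.num.toNat : ℤ) ^ 3 := by rw [h3, h2]
  exact_mod_cast this

/-- If all complex eigenvalues of a 3×3 integer matrix `M` have the same
modulus `r > 1`, then either `|det M|` is a perfect cube, or the characteristic
polynomial of `M` (over ℂ) equals `X ^ 3 - s * |det M|` for a sign `s`. -/
theorem stmt0 (M : Matrix (Fin 3) (Fin 3) ℤ) (r : ℝ) (hr : 1 < r)
    (h : ∀ z : ℂ, ((M.map (Int.cast : ℤ → ℂ)).charpoly).IsRoot z → ‖z‖ = r) :
    (∃ n : ℕ, M.det.natAbs = n ^ 3) ∨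
      ∃ s : ℤ, (s = 1 ∨ s = -1) ∧
        (M.map (Int.cast : ℤ → ℂ)).charpoly =
          Polynomial.X ^ 3 - Polynomial.C ((s * (M.det.natAbs : ℤ) : ℤ) : ℂ) := by
  have hmap : (M.map (Int.cast : ℤ → ℂ)) = M.map (Int.castRingHom ℂ) := rfl
  set p := (M.map (Int.cast : ℤ → ℂ)).charpoly with hpdef
  have hmonic : p.Monic := (M.map _).charpoly_monic
  have hpne : p ≠ 0 := hmonic.ne_zero
  have hpq : p = (M.charpoly).map (Int.castRingHom ℂ) := by
    rw [hpdef, hmap, Matrix.charpoly_map]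
  have hdeg : p.natDegree = 3 := by
    rw [hpdef]
    simpa using (M.map (Int.cast : ℤ → ℂ)).charpoly_natDegree_eq_dim
  have hcard : Multiset.card p.roots = 3 := by
    rw [← hdeg, ← Polynomial.splits_iff_card_roots]
    exact IsAlgClosed.splits p
  obtain ⟨x, y, z, hxyz⟩ := Multiset.card_eq_three.mp hcard
  have hfac : p = (X - C x) * ((X - C y) * (X - C z)) := by
    have hf := (IsAlgClosed.splits p).eq_prod_roots_of_monic hmonic
    rw [hxyz] at hf
    simpa [Multiset.map_cons, Multiset.prod_cons, mul_assoc] using hf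
  have hexp : p = X ^ 3 - C (x + y + z) * X ^ 2
      + C (x * y + x * z + y * z) * X - C (x * y * z) := by
    rw [hfac]
    simp only [C_add, C_mul]
    ring
  have hc2 : p.coeff 2 = -(x + y + z) := by
    rw [hexp]
    simp [coeff_X_pow, coeff_C, add_mul]
  have hc1 : p.coeff 1 = x * y + x * z + y * z := by
    rw [hexp]
    simp [coeff_X_pow, coeff_C, add_mul]
  have hc0 : p.coeff 0 = -(x * y * z) := by
    rw [hexp]
    simp [coeff_X_pow, coeff_C, add_mul]
  set A := M.charpoly.coeff 2 with hAdef
  set B := M.charpoly.coeff 1 with hBdef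
  have hA : p.coeff 2 = ((A : ℤ) : ℂ) := by rw [hpq, Polynomial.coeff_map]; rfl
  have hB : p.coeff 1 = ((B : ℤ) : ℂ) := by rw [hpq, Polynomial.coeff_map]; rfl
  -- determinant
  have hdet : ((M.det : ℤ) : ℂ) = x * y * z := by
    have h1 := Matrix.det_eq_sign_charpoly_coeff (M.map (Int.castRingHom ℂ))
    rw [← hmap, ← hpdef, hc0] at h1
    have hdm : ((M.det : ℤ) : ℂ) = (M.map (Int.cast : ℤ → ℂ)).det := by
      have := RingHom.map_det (Int.castRingHom ℂ) M
      rw [RingHom.mapMatrix_apply] at this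
      rw [hmap]
      exact this
    rw [hdm, h1]
    norm_num [Fintype.card_fin]
  -- moduli of roots
  have hx : ‖x‖ = r := h x (Polynomial.isRoot_of_mem_roots (by rw [hxyz]; simp))
  have hy : ‖y‖ = r := h y (Polynomial.isRoot_of_mem_roots (by rw [hxyz]; simp))
  have hz : ‖z‖ = r := h z (Polynomial.isRoot_of_mem_roots (by rw [hxyz]; simp))
  have habs : (M.det.natAbs : ℝ) = r ^ 3 := by
    have h1 : ‖((M.det : ℂ))‖ = r ^ 3 := by
      rw [hdet, norm_mul, norm_mul, hx, hy, hz]; ring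
    rw [Complex.norm_intCast] at h1
    rw [← h1]
    simp [Nat.cast_natAbs]
  have hr0 : (0 : ℝ) < r := lt_trans one_pos hr
  -- conjugation relations
  have hxc : x * (starRingEnd ℂ) x = ((r : ℝ) : ℂ) ^ 2 := by
    rw [Complex.mul_conj, Complex.normSq_eq_norm_sq, hx]; push_cast; ring
  have hyc : y * (starRingEnd ℂ) y = ((r : ℝ) : ℂ) ^ 2 := by
    rw [Complex.mul_conj, Complex.normSq_eq_norm_sq, hy]; push_cast; ring
  have hzc : z * (starRingEnd ℂ) z = ((r : ℝ) : ℂ) ^ 2 := by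
    rw [Complex.mul_conj, Complex.normSq_eq_norm_sq, hz]; push_cast; ring
  have hsum1 : x + y + z = -((A : ℤ) : ℂ) := by
    have := hc2.symm.trans hA
    linear_combination -this
  have hsum : (starRingEnd ℂ) x + (starRingEnd ℂ) y + (starRingEnd ℂ) z = x + y + z := by
    calc (starRingEnd ℂ) x + (starRingEnd ℂ) y + (starRingEnd ℂ) z
        = (starRingEnd ℂ) (x + y + z) := by rw [map_add, map_add]
      _ = (starRingEnd ℂ) (-((A : ℤ) : ℂ)) := by rw [hsum1]
      _ = -((A : ℤ) : ℂ) := by simp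
      _ = x + y + z := hsum1.symm
  have key : (x * y + x * z + y * z) * ((r : ℝ) : ℂ) ^ 2 = (x * y * z) * (x + y + z) := by
    rw [← hsum]
    linear_combination (-(y * z)) * hxc + (-(x * z)) * hyc + (-(x * y)) * hzc
  have keyC : ((B : ℤ) : ℂ) * ((r : ℝ) : ℂ) ^ 2 = ((M.det : ℤ) : ℂ) * (-((A : ℤ) : ℂ)) := by
    rw [← hB, hc1, ← hsum1, hdet]
    exact key
  have keyR : (B : ℝ) * r ^ 2 = (M.det : ℝ) * (-(A : ℝ)) := by
    have h' : (((B : ℝ) * r ^ 2 : ℝ) : ℂ) = (((M.det : ℝ) * (-(A : ℝ)) : ℝ) : ℂ) := by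
      simp only [Complex.ofReal_mul, Complex.ofReal_pow, Complex.ofReal_neg, Complex.ofReal_intCast]; exact keyC
    exact Complex.ofReal_injective h'
  have hdet0 : M.det ≠ 0 := by
    intro h0
    rw [h0] at habs
    simp at habs
    nlinarith
  by_cases hA0 : A = 0
  · -- charpoly is X^3 - det
    right
    have hB0 : B = 0 := by
      have : (B : ℝ) * r ^ 2 = 0 := by rw [keyR, hA0]; simp
      have hB' : (B : ℝ) = 0 := by
        rcases mul_eq_zero.mp this with h' | h'
        · exact h'
        · exfalso; nlinarith
      exact_mod_cast hB'
    have hsum0 : x + y + z = 0 := by rw [hsum1, hA0]; simp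
    have he2 : x * y + x * z + y * z = 0 := by
      rw [← hc1, hB, hB0]; simp
    have hp3 : p = X ^ 3 - C ((M.det : ℤ) : ℂ) := by
      rw [hexp, hsum0, he2, hdet]
      simp
    rcases hdet0.lt_or_gt with hneg | hpos
    · refine ⟨-1, Or.inr rfl, ?_⟩
      have hs : ((-1 : ℤ) * (M.det.natAbs : ℤ)) = M.det := by omega
      rw [hs, hp3]
    · refine ⟨1, Or.inl rfl, ?_⟩
      have hs : ((1 : ℤ) * (M.det.natAbs : ℤ)) = M.det := by omega
      rw [hs, hp3]
  · -- r is rational, hence an integer; |det| is a perfect cube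
    left
    have hB0 : B ≠ 0 := by
      intro h0
      rw [h0] at keyR
      simp at keyR
      rcases keyR with h' | h'
      · exact hdet0 (by exact_mod_cast h')
      · exact hA0 (by exact_mod_cast h')
    set q0 : ℚ := (M.det.natAbs : ℚ) * (B : ℚ) / ((M.det : ℚ) * (-(A : ℚ))) with hq0def
    have hBne : (B : ℝ) ≠ 0 := Int.cast_ne_zero.mpr hB0
    have hAne : (-(A : ℝ)) ≠ 0 := by
      simpa using (Int.cast_ne_zero (α := ℝ)).mpr hA0
    have hdne : ((M.det : ℝ)) ≠ 0 := Int.cast_ne_zero.mpr hdet0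
    have hq0cast : (q0 : ℝ) = (M.det.natAbs : ℝ) * (B : ℝ) / ((M.det : ℝ) * (-(A : ℝ))) := by
      rw [hq0def]; simp only [Rat.cast_div, Rat.cast_mul, Rat.cast_neg, Rat.cast_natCast, Rat.cast_intCast]
    have hq0r : (q0 : ℝ) = r := by
      rw [hq0cast, ← keyR, habs]
      field_simp
    have hq0nonneg : 0 ≤ q0 := by
      have : (0 : ℝ) ≤ (q0 : ℝ) := by rw [hq0r]; linarith
      exact_mod_cast this
    have hq0cube : q0 ^ 3 = (M.det.natAbs : ℚ) := by
      have : ((q0 ^ 3 : ℚ) : ℝ) = ((M.det.natAbs : ℚ) : ℝ) := by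
        push_cast
        rw [hq0r, ← habs]
      exact_mod_cast this
    obtain ⟨n, hn⟩ := aux_cube_rat q0 M.det.natAbs hq0nonneg hq0cube
    exact ⟨n, hn⟩
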